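/- Let G be a finite group of order n that is not cyclic. Then the characteristic polynomial of the distance matrix of the strong power graph P_s(G) equals (x - (n-1)) · (x+1)^{n-1}; equivalently, the distance spectrum of P_s(G) consists of the eigenvalue n-1 with multiplicity 1 and the eigenvalue -1 with multiplicity n-1. -/

import Mathlib

/-- The strong power graph of a finite group `G` of order `n`: two distinct
vertices `x` and `y` are adjacent iff `x ^ a = y ^ b` for some positive
integers `a, b < n`. -/
def strongPowerGraph (G : Type*) [Group G] [Fintype G] : SimpleGraph G where
  Adj x y := x ≠ y ∧ ∃ a b : ℕ, 0 < a ∧ a < Fintype.card G ∧ 0 < b ∧ b < Fintype.card G ∧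
    x ^ a = y ^ b
  symm := by
    constructor
    rintro x y ⟨h, a, b, ha, ha', hb, hb', hab⟩
    exact ⟨h.symm, b, a, hb, hb', ha, ha', hab.symm⟩
  loopless := by
    constructor
    rintro x ⟨h, -⟩
    exact h rfl

/-- The distance matrix (with real entries) of the strong power graph of `G`. -/
noncomputable def distMatrixG (G : Type*) [Group G] [Fintype G] : Matrix G G ℝ :=
  Matrix.of fun i j => ((strongPowerGraph G).dist i j : ℝ)

open Classical in
/-- The adjacency matrix (with real entries) of the strong power graph of `G`. -/
noncomputable def adjMatrixG (G : Type*) [Group G] [Fintype G] : Matrix G G ℝ :=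
  Matrix.of fun i j => if (strongPowerGraph G).Adj i j then 1 else 0

open Matrix Polynomial in
/-- The determinant of a matrix with `a` on the diagonal and `b` elsewhere. -/
lemma det_diag_off {K : Type*} [Field K] {ι : Type*} [Fintype ι] [DecidableEq ι] [Nonempty ι]
    (a b : K) (hab : a - b ≠ 0) :
    (Matrix.of fun i j : ι => if i = j then a else b).det
      = (a + ((Fintype.card ι : K) - 1) * b) * (a - b) ^ (Fintype.card ι - 1) := by
  have hM : (Matrix.of fun i j : ι => if i = j then a else b)
      = (a - b) • (1 + Matrix.replicateCol Unit (fun _ : ι => b / (a - b)) *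
          Matrix.replicateRow Unit (fun _ : ι => (1:K))) := by
    ext i j
    by_cases h : i = j <;>
      simp [h, Matrix.mul_apply, Matrix.one_apply, mul_add, mul_div_cancel₀ _ hab, sub_add_cancel]
  rw [hM, Matrix.det_smul, Matrix.det_one_add_replicateCol_mul_replicateRow]
  have hd : (fun _ : ι => (1 : K)) ⬝ᵥ (fun _ : ι => b / (a - b))
      = (Fintype.card ι : K) * (b / (a - b)) := by
    simp only [dotProduct, one_mul, Finset.sum_const, nsmul_eq_mul, Finset.card_univ]
  rw [hd]
  have hn : 1 ≤ Fintype.card ι := Fintype.card_pos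
  have hpow : (a - b) ^ Fintype.card ι = (a - b) * (a - b) ^ (Fintype.card ι - 1) := by
    conv_lhs => rw [← Nat.succ_pred_eq_of_pos hn, pow_succ']
    rw [Nat.pred_eq_sub_one]
  field_simp [hpow]
  rw [hpow]
  ring

/-- In a non-cyclic finite group the strong power graph is complete. -/
lemma strongPowerGraph_adj_of_ne {G : Type*} [Group G] [Fintype G] (hG : ¬ IsCyclic G)
    {x y : G} (h : x ≠ y) : (strongPowerGraph G).Adj x y := by
  have key : ∀ z : G, 0 < orderOf z ∧ orderOf z < Fintype.card G := by
    intro z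
    refine ⟨orderOf_pos z, lt_of_le_of_ne orderOf_le_card_univ ?_⟩
    intro hz
    exact hG (isCyclic_of_orderOf_eq_card z (by simpa [Nat.card_eq_fintype_card] using hz))
  obtain ⟨hx, hx'⟩ := key x
  obtain ⟨hy, hy'⟩ := key y
  exact ⟨h, orderOf x, orderOf y, hx, hx', hy, hy',
    by rw [pow_orderOf_eq_one, pow_orderOf_eq_one]⟩

/-- For non-cyclic `G`, the distance matrix is the all-ones matrix minus the identity. -/
lemma distMatrixG_eq {G : Type*} [Group G] [Fintype G] [DecidableEq G] (hG : ¬ IsCyclic G) :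
    distMatrixG G = Matrix.of fun i j : G => if i = j then (0:ℝ) else 1 := by
  ext i j
  by_cases h : i = j
  · simp [distMatrixG, h]
  · have : (strongPowerGraph G).dist i j = 1 :=
      (SimpleGraph.dist_eq_one_iff_adj).2 (strongPowerGraph_adj_of_ne hG h)
    simp [distMatrixG, h, this]

open Polynomial in
/-- If a finite group `G` of order `n` is not cyclic, then the characteristic polynomial
of the distance matrix of its strong power graph is `(x - (n-1)) * (x+1)^(n-1)`;
equivalently its distance spectrum is `n-1` (multiplicity 1) and `-1` (multiplicity `n-1`). -/
theorem distMatrixG_charpoly_of_not_isCyclic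
    (G : Type*) [Group G] [Fintype G] [DecidableEq G] (hG : ¬ IsCyclic G) :
    (distMatrixG G).charpoly =
      (X - C ((Fintype.card G : ℝ) - 1)) * (X + 1) ^ (Fintype.card G - 1) := by
  have hcm : Matrix.charmatrix (distMatrixG G)
      = Matrix.of fun i j : G => if i = j then (X : ℝ[X]) else -1 := by
    rw [distMatrixG_eq hG]
    ext i j
    by_cases h : i = j <;>
      simp [Matrix.charmatrix, h, Matrix.one_apply, Matrix.diagonal, Matrix.of_apply]
  rw [Matrix.charpoly, hcm]
  -- move to RatFunc ℝ
  set f := algebraMap ℝ[X] (RatFunc ℝ) with hf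
  apply RatFunc.algebraMap_injective ℝ
  rw [RingHom.map_det]
  have hmap : f.mapMatrix (Matrix.of fun i j : G => if i = j then (X : ℝ[X]) else -1)
      = Matrix.of fun i j : G => if i = j then f X else (-1 : RatFunc ℝ) := by
    ext i j
    by_cases h : i = j <;> simp [h, Matrix.map_apply]
  rw [hmap]
  have hne : f X - (-1) = f (X + 1) := by simp [map_add]
  have hfx1 : f (X + 1) ≠ 0 := by
    intro h
    have h2 : (X + 1 : ℝ[X]) = 0 :=
      RatFunc.algebraMap_injective ℝ (h.trans (map_zero f).symm)
    have h3 : (X + C (1:ℝ)) ≠ 0 := Polynomial.X_add_C_ne_zero 1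
    simp only [Polynomial.C_1] at h3
    exact h3 h2
  rw [det_diag_off (f X) (-1) (by rw [hne]; exact hfx1)]
  simp only [_root_.map_mul, map_pow, map_sub, _root_.map_add, _root_.map_one, map_natCast]
  rw [hne]
  ring_nf
  simp [_root_.map_mul, map_pow, map_sub, _root_.map_add, _root_.map_one]
  rw [hf, RatFunc.algebraMap_X]
  ring
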